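/- For λ ≠ 0 and constants c₁, c₂, a ≠ 0, c₃, the function ψ(θ¹,θ²) = -(1/(4λ)) ln{c₂ exp(c₁θ² - c₁ a ln θ¹) - 1} + c₃ satisfies the constant-curvature equation ψ₁₁(ψ₁₁₂ψ₂₂₂ - ψ₁₂₂²) - ψ₁₂(ψ₁₁₁ψ₂₂₂ - ψ₁₁₂ψ₁₂₂) + ψ₂₂(ψ₁₁₁ψ₁₂₂ - ψ₁₁₂²) = 4λ(ψ₁₁ψ₂₂ - ψ₁₂²)² on any open set where θ¹ > 0 and c₂ exp(c₁θ² - c₁ a ln θ¹) > 1. -/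

import Mathlib

open Real

noncomputable def pd1 (f : ℝ → ℝ → ℝ) : ℝ → ℝ → ℝ := fun t x => deriv (fun s => f s x) t
noncomputable def pd2 (f : ℝ → ℝ → ℝ) : ℝ → ℝ → ℝ := fun t x => deriv (fun s => f t s) x
noncomputable def p11 (f : ℝ → ℝ → ℝ) : ℝ → ℝ → ℝ := pd1 (pd1 f)
noncomputable def p12 (f : ℝ → ℝ → ℝ) : ℝ → ℝ → ℝ := pd1 (pd2 f)
noncomputable def p22 (f : ℝ → ℝ → ℝ) : ℝ → ℝ → ℝ := pd2 (pd2 f)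
noncomputable def p111 (f : ℝ → ℝ → ℝ) : ℝ → ℝ → ℝ := pd1 (p11 f)
noncomputable def p112 (f : ℝ → ℝ → ℝ) : ℝ → ℝ → ℝ := pd1 (p12 f)
noncomputable def p122 (f : ℝ → ℝ → ℝ) : ℝ → ℝ → ℝ := pd1 (p22 f)
noncomputable def p222 (f : ℝ → ℝ → ℝ) : ℝ → ℝ → ℝ := pd2 (p22 f)

/-- Determinant of the Hessian (Fisher information metric) of a potential function. -/
noncomputable def detg (f : ℝ → ℝ → ℝ) : ℝ → ℝ → ℝ := fun t x =>
  p11 f t x * p22 f t x - (p12 f t x) ^ 2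

/-- The numerator `4 det(g) · R_{1212}` of the curvature of a Hessian metric. -/
noncomputable def Rnum (f : ℝ → ℝ → ℝ) : ℝ → ℝ → ℝ := fun t x =>
  p11 f t x * (p112 f t x * p222 f t x - (p122 f t x) ^ 2)
  - p12 f t x * (p111 f t x * p222 f t x - p112 f t x * p122 f t x)
  + p22 f t x * (p111 f t x * p122 f t x - (p112 f t x) ^ 2)

namespace X4aX2aux

noncomputable section

variable (k c1 c2 a : ℝ)

/-- The exponential building block. -/
def FF (t x : ℝ) : ℝ := c2 * Real.exp (c1 * x - c1 * a * Real.log t)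

-- first derivatives of FF
lemma hFt {t : ℝ} (x : ℝ) (ht : 0 < t) :
    HasDerivAt (fun s => FF c1 c2 a s x) (-(c1 * a) * FF c1 c2 a t x / t) t := by
  have h0 : HasDerivAt (fun s : ℝ => c1 * x - c1 * a * Real.log s)
      (-(c1 * a * t⁻¹)) t := by
    simpa using ((Real.hasDerivAt_log ht.ne').const_mul (c1 * a)).const_sub (c1 * x)
  have h1 := (h0.exp).const_mul c2
  refine h1.congr_deriv ?_
  simp only [FF]
  field_simp [ht.ne']

lemma hFx (t : ℝ) {x : ℝ} :
    HasDerivAt (fun s => FF c1 c2 a t s) (c1 * FF c1 c2 a t x) x := by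
  have h0 : HasDerivAt (fun s : ℝ => c1 * s - c1 * a * Real.log t) c1 x := by
    simpa using ((hasDerivAt_id x).const_mul c1).sub_const (c1 * a * Real.log t)
  have h1 := (h0.exp).const_mul c2
  refine h1.congr_deriv ?_
  simp only [FF]; ring

-- derivative formulas
def D1 (t x : ℝ) : ℝ := -(k * (c1 * a)) * FF c1 c2 a t x / (t * (FF c1 c2 a t x - 1))
def D2 (t x : ℝ) : ℝ := k * c1 * FF c1 c2 a t x / (FF c1 c2 a t x - 1)
def D11 (t x : ℝ) : ℝ :=
  -(k * (c1 * a)) * (FF c1 c2 a t x * (c1 * a + 1 - FF c1 c2 a t x)) /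
    (t ^ 2 * (FF c1 c2 a t x - 1) ^ 2)
def D12 (t x : ℝ) : ℝ := k * c1 * (c1 * a) * FF c1 c2 a t x / (t * (FF c1 c2 a t x - 1) ^ 2)
def D22 (t x : ℝ) : ℝ := -(k * c1 ^ 2) * FF c1 c2 a t x / (FF c1 c2 a t x - 1) ^ 2
def D111 (t x : ℝ) : ℝ :=
  k * (c1 * a) * (FF c1 c2 a t x * ((c1 * a + 1) * (4 - c1 * a) * FF c1 c2 a t x
    - 2 * FF c1 c2 a t x ^ 2 - (c1 * a + 1) * (c1 * a + 2))) /
    (t ^ 3 * (FF c1 c2 a t x - 1) ^ 3)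
def D112 (t x : ℝ) : ℝ :=
  k * c1 * (c1 * a) * (FF c1 c2 a t x * ((c1 * a + 1) + (c1 * a - 1) * FF c1 c2 a t x)) /
    (t ^ 2 * (FF c1 c2 a t x - 1) ^ 3)
def D122 (t x : ℝ) : ℝ :=
  -(k * c1 ^ 2 * (c1 * a)) * (FF c1 c2 a t x * (FF c1 c2 a t x + 1)) /
    (t * (FF c1 c2 a t x - 1) ^ 3)
def D222 (t x : ℝ) : ℝ :=
  k * c1 ^ 3 * (FF c1 c2 a t x * (FF c1 c2 a t x + 1)) / (FF c1 c2 a t x - 1) ^ 3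

variable {t x : ℝ}

-- ψ first derivatives
lemma L1 (c3 : ℝ) (ht : 0 < t) (hF : 1 < FF c1 c2 a t x) :
    HasDerivAt (fun s => k * Real.log (FF c1 c2 a s x - 1) + c3) (D1 k c1 c2 a t x) t := by
  have hne : FF c1 c2 a t x - 1 ≠ 0 := by linarith
  have h := ((((hFt c1 c2 a x ht).sub_const 1).log hne).const_mul k).add_const c3
  refine h.congr_deriv ?_
  simp only [D1]
  field_simp

lemma L2 (c3 : ℝ) (hF : 1 < FF c1 c2 a t x) :
    HasDerivAt (fun s => k * Real.log (FF c1 c2 a t s - 1) + c3) (D2 k c1 c2 a t x) x := by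
  have hne : FF c1 c2 a t x - 1 ≠ 0 := by linarith
  have h := ((((hFx c1 c2 a t).sub_const 1).log hne).const_mul k).add_const c3
  refine h.congr_deriv ?_
  simp only [D2]
  field_simp

-- second derivatives
lemma L11 (ht : 0 < t) (hF : 1 < FF c1 c2 a t x) :
    HasDerivAt (fun s => D1 k c1 c2 a s x) (D11 k c1 c2 a t x) t := by
  have hne : FF c1 c2 a t x - 1 ≠ 0 := by linarith
  have hden : t * (FF c1 c2 a t x - 1) ≠ 0 := mul_ne_zero ht.ne' hne
  have hnum := (hFt c1 c2 a x ht).const_mul (-(k * (c1 * a)))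
  have hd := (hasDerivAt_id t).mul ((hFt c1 c2 a x ht).sub_const 1)
  have h := hnum.div hd hden
  refine h.congr_deriv ?_
  simp only [D11, Pi.mul_apply, Pi.pow_apply, id]
  field_simp
  ring

lemma L12 (ht : 0 < t) (hF : 1 < FF c1 c2 a t x) :
    HasDerivAt (fun s => D2 k c1 c2 a s x) (D12 k c1 c2 a t x) t := by
  have hne : FF c1 c2 a t x - 1 ≠ 0 := by linarith
  have hnum := (hFt c1 c2 a x ht).const_mul (k * c1)
  have hd := (hFt c1 c2 a x ht).sub_const 1
  have h := hnum.div hd hne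
  refine h.congr_deriv ?_
  simp only [D12]
  field_simp
  ring

lemma L22 (hF : 1 < FF c1 c2 a t x) :
    HasDerivAt (fun s => D2 k c1 c2 a t s) (D22 k c1 c2 a t x) x := by
  have hne : FF c1 c2 a t x - 1 ≠ 0 := by linarith
  have hnum := (hFx c1 c2 a t (x := x)).const_mul (k * c1)
  have hd := (hFx c1 c2 a t (x := x)).sub_const 1
  have h := hnum.div hd hne
  refine h.congr_deriv ?_
  simp only [D22]
  field_simp
  ring

-- third derivatives
lemma L111 (ht : 0 < t) (hF : 1 < FF c1 c2 a t x) :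
    HasDerivAt (fun s => D11 k c1 c2 a s x) (D111 k c1 c2 a t x) t := by
  have hne : FF c1 c2 a t x - 1 ≠ 0 := by linarith
  have hden : t ^ 2 * (FF c1 c2 a t x - 1) ^ 2 ≠ 0 :=
    mul_ne_zero (pow_ne_zero 2 ht.ne') (pow_ne_zero 2 hne)
  have hnum := ((hFt c1 c2 a x ht).mul
    ((hFt c1 c2 a x ht).const_sub (c1 * a + 1))).const_mul (-(k * (c1 * a)))
  have hd := (hasDerivAt_pow 2 t).mul (((hFt c1 c2 a x ht).sub_const 1).pow 2)
  have h := hnum.div hd hden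
  refine h.congr_deriv ?_
  simp only [D111, Pi.mul_apply, Pi.pow_apply, id]
  field_simp
  ring

lemma L112 (ht : 0 < t) (hF : 1 < FF c1 c2 a t x) :
    HasDerivAt (fun s => D12 k c1 c2 a s x) (D112 k c1 c2 a t x) t := by
  have hne : FF c1 c2 a t x - 1 ≠ 0 := by linarith
  have hden : t * (FF c1 c2 a t x - 1) ^ 2 ≠ 0 := mul_ne_zero ht.ne' (pow_ne_zero 2 hne)
  have hnum := (hFt c1 c2 a x ht).const_mul (k * c1 * (c1 * a))
  have hd := (hasDerivAt_id t).mul (((hFt c1 c2 a x ht).sub_const 1).pow 2)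
  have h := hnum.div hd hden
  refine h.congr_deriv ?_
  simp only [D112, Pi.mul_apply, Pi.pow_apply, id]
  field_simp
  ring

lemma L122 (ht : 0 < t) (hF : 1 < FF c1 c2 a t x) :
    HasDerivAt (fun s => D22 k c1 c2 a s x) (D122 k c1 c2 a t x) t := by
  have hne : FF c1 c2 a t x - 1 ≠ 0 := by linarith
  have hden : (FF c1 c2 a t x - 1) ^ 2 ≠ 0 := pow_ne_zero 2 hne
  have hnum := (hFt c1 c2 a x ht).const_mul (-(k * c1 ^ 2))
  have hd := ((hFt c1 c2 a x ht).sub_const 1).pow 2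
  have h := hnum.div hd hden
  refine h.congr_deriv ?_
  simp only [D122, Pi.mul_apply, Pi.pow_apply, id]
  field_simp
  ring

lemma L222 (hF : 1 < FF c1 c2 a t x) :
    HasDerivAt (fun s => D22 k c1 c2 a t s) (D222 k c1 c2 a t x) x := by
  have hne : FF c1 c2 a t x - 1 ≠ 0 := by linarith
  have hden : (FF c1 c2 a t x - 1) ^ 2 ≠ 0 := pow_ne_zero 2 hne
  have hnum := (hFx c1 c2 a t (x := x)).const_mul (-(k * c1 ^ 2))
  have hd := ((hFx c1 c2 a t (x := x)).sub_const 1).pow 2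
  have h := hnum.div hd hden
  refine h.congr_deriv ?_
  simp only [D222, Pi.mul_apply, Pi.pow_apply, id]
  field_simp
  ring

-- eventual domain membership
lemma ev_t (ht : 0 < t) (hF : 1 < FF c1 c2 a t x) :
    ∀ᶠ s in nhds t, 0 < s ∧ 1 < FF c1 c2 a s x := by
  have h1 : ∀ᶠ s in nhds t, 0 < s := eventually_gt_nhds ht
  have hc : ContinuousAt (fun s => FF c1 c2 a s x) t := (hFt c1 c2 a x ht).continuousAt
  have h2 : ∀ᶠ s in nhds t, 1 < FF c1 c2 a s x := hc (Ioi_mem_nhds hF)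
  filter_upwards [h1, h2] with s hs1 hs2 using ⟨hs1, hs2⟩

lemma ev_x (hF : 1 < FF c1 c2 a t x) :
    ∀ᶠ s in nhds x, 1 < FF c1 c2 a t s := by
  have hc : ContinuousAt (fun s => FF c1 c2 a t s) x := (hFx c1 c2 a t).continuousAt
  exact hc (Ioi_mem_nhds hF)

end

end X4aX2aux

/-- The group-invariant solution from `X₄ + aX₂`: for `λ ≠ 0`,
`ψ(θ¹,θ²) = -(1/(4λ)) ln{c₂ exp(c₁θ² - c₁a ln θ¹) - 1} + c₃` satisfies the
constant-curvature equation on any open set where `θ¹ > 0` and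
`c₂ exp(c₁θ² - c₁a ln θ¹) > 1`. -/
theorem invariant_solution_X4aX2 (lam : ℝ) (hlam : lam ≠ 0) (c1 c2 c3 a : ℝ) (ha : a ≠ 0) :
    let ψ : ℝ → ℝ → ℝ := fun θ1 θ2 =>
      -(1 / (4 * lam)) * Real.log (c2 * Real.exp (c1 * θ2 - c1 * a * Real.log θ1) - 1) + c3
    ∀ θ1 θ2, 0 < θ1 → 1 < c2 * Real.exp (c1 * θ2 - c1 * a * Real.log θ1) →
      Rnum ψ θ1 θ2 = 4 * lam * (detg ψ θ1 θ2) ^ 2 := by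
  intro ψ θ1 θ2 ht hFdom
  set k : ℝ := -(1 / (4 * lam)) with hk
  have hψ : ψ = fun t x => k * Real.log (X4aX2aux.FF c1 c2 a t x - 1) + c3 := rfl
  have hF' : 1 < X4aX2aux.FF c1 c2 a θ1 θ2 := hFdom
  have pd1_eq : ∀ t x, 0 < t → 1 < X4aX2aux.FF c1 c2 a t x →
      pd1 ψ t x = X4aX2aux.D1 k c1 c2 a t x := fun t x h1 h2 =>
    (X4aX2aux.L1 k c1 c2 a c3 h1 h2).deriv
  have pd2_eq : ∀ t x, 1 < X4aX2aux.FF c1 c2 a t x →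
      pd2 ψ t x = X4aX2aux.D2 k c1 c2 a t x := fun t x h2 =>
    (X4aX2aux.L2 k c1 c2 a c3 h2).deriv
  have p11_eq : ∀ t x, 0 < t → 1 < X4aX2aux.FF c1 c2 a t x →
      p11 ψ t x = X4aX2aux.D11 k c1 c2 a t x := by
    intro t x h1 h2
    have hev : (fun s => pd1 ψ s x) =ᶠ[nhds t] (fun s => X4aX2aux.D1 k c1 c2 a s x) := by
      filter_upwards [X4aX2aux.ev_t c1 c2 a h1 h2] with s hs using pd1_eq s x hs.1 hs.2
    show deriv (fun s => pd1 ψ s x) t = _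
    rw [hev.deriv_eq, (X4aX2aux.L11 k c1 c2 a h1 h2).deriv]
  have p12_eq : ∀ t x, 0 < t → 1 < X4aX2aux.FF c1 c2 a t x →
      p12 ψ t x = X4aX2aux.D12 k c1 c2 a t x := by
    intro t x h1 h2
    have hev : (fun s => pd2 ψ s x) =ᶠ[nhds t] (fun s => X4aX2aux.D2 k c1 c2 a s x) := by
      filter_upwards [X4aX2aux.ev_t c1 c2 a h1 h2] with s hs using pd2_eq s x hs.2
    show deriv (fun s => pd2 ψ s x) t = _
    rw [hev.deriv_eq, (X4aX2aux.L12 k c1 c2 a h1 h2).deriv]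
  have p22_eq : ∀ t x, 0 < t → 1 < X4aX2aux.FF c1 c2 a t x →
      p22 ψ t x = X4aX2aux.D22 k c1 c2 a t x := by
    intro t x h1 h2
    have hev : (fun s => pd2 ψ t s) =ᶠ[nhds x] (fun s => X4aX2aux.D2 k c1 c2 a t s) := by
      filter_upwards [X4aX2aux.ev_x c1 c2 a h2] with s hs using pd2_eq t s hs
    show deriv (fun s => pd2 ψ t s) x = _
    rw [hev.deriv_eq, (X4aX2aux.L22 k c1 c2 a h2).deriv]
  have p111_eq : p111 ψ θ1 θ2 = X4aX2aux.D111 k c1 c2 a θ1 θ2 := by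
    have hev : (fun s => p11 ψ s θ2) =ᶠ[nhds θ1] (fun s => X4aX2aux.D11 k c1 c2 a s θ2) := by
      filter_upwards [X4aX2aux.ev_t c1 c2 a ht hF'] with s hs using p11_eq s θ2 hs.1 hs.2
    show deriv (fun s => p11 ψ s θ2) θ1 = _
    rw [hev.deriv_eq, (X4aX2aux.L111 k c1 c2 a ht hF').deriv]
  have p112_eq : p112 ψ θ1 θ2 = X4aX2aux.D112 k c1 c2 a θ1 θ2 := by
    have hev : (fun s => p12 ψ s θ2) =ᶠ[nhds θ1] (fun s => X4aX2aux.D12 k c1 c2 a s θ2) := by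
      filter_upwards [X4aX2aux.ev_t c1 c2 a ht hF'] with s hs using p12_eq s θ2 hs.1 hs.2
    show deriv (fun s => p12 ψ s θ2) θ1 = _
    rw [hev.deriv_eq, (X4aX2aux.L112 k c1 c2 a ht hF').deriv]
  have p122_eq : p122 ψ θ1 θ2 = X4aX2aux.D122 k c1 c2 a θ1 θ2 := by
    have hev : (fun s => p22 ψ s θ2) =ᶠ[nhds θ1] (fun s => X4aX2aux.D22 k c1 c2 a s θ2) := by
      filter_upwards [X4aX2aux.ev_t c1 c2 a ht hF'] with s hs using p22_eq s θ2 hs.1 hs.2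
    show deriv (fun s => p22 ψ s θ2) θ1 = _
    rw [hev.deriv_eq, (X4aX2aux.L122 k c1 c2 a ht hF').deriv]
  have p222_eq : p222 ψ θ1 θ2 = X4aX2aux.D222 k c1 c2 a θ1 θ2 := by
    have hev : (fun s => p22 ψ θ1 s) =ᶠ[nhds θ2] (fun s => X4aX2aux.D22 k c1 c2 a θ1 s) := by
      filter_upwards [X4aX2aux.ev_x c1 c2 a hF'] with s hs using p22_eq θ1 s ht hs
    show deriv (fun s => p22 ψ θ1 s) θ2 = _
    rw [hev.deriv_eq, (X4aX2aux.L222 k c1 c2 a hF').deriv]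
  have hFne : X4aX2aux.FF c1 c2 a θ1 θ2 - 1 ≠ 0 := by
    have := hF'; linarith
  have htne : θ1 ≠ 0 := ht.ne'
  simp only [Rnum, detg]
  rw [p11_eq θ1 θ2 ht hF', p12_eq θ1 θ2 ht hF', p22_eq θ1 θ2 ht hF',
    p111_eq, p112_eq, p122_eq, p222_eq]
  simp only [X4aX2aux.D11, X4aX2aux.D12, X4aX2aux.D22, X4aX2aux.D111, X4aX2aux.D112,
    X4aX2aux.D122, X4aX2aux.D222, hk]
  field_simp
  ring
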